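/- Any Toeplitz matrix B ∈ ℂ^{n×n} can be factorized as B = G D G*, where D is a 2n×2n diagonal matrix, G is the n×2n matrix with entries G_{j,k} = (1/(2n)) · exp(iπ(j+1)k/n) (indices j ∈ {0,…,n−1}, k ∈ {0,…,2n−1}), and G* is the conjugate transpose of G. -/

import Mathlib

open Complex Matrix

lemma sum_pow_root (n : ℕ) (hn : n ≠ 0) (r : ℤ) :
    ∑ m : Fin (2*n), Complex.exp (Real.pi * I / n) ^ (r * (m:ℕ)) =
      if (2*n : ℤ) ∣ r then (2*n : ℂ) else 0 := by
  set ω := Complex.exp (Real.pi * I / n) with hω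
  have hprim : IsPrimitiveRoot ω (2*n) := by
    have := Complex.isPrimitiveRoot_exp (2*n) (by simpa using hn)
    convert this using 2
    have : (n:ℂ) ≠ 0 := Nat.cast_ne_zero.mpr hn
    push_cast; field_simp
  set z := ω ^ r with hz
  have hsum : ∑ m : Fin (2*n), ω ^ (r * (m:ℕ)) = ∑ m ∈ Finset.range (2*n), z ^ m := by
    rw [Finset.sum_range fun m => z ^ m]
    refine Finset.sum_congr rfl fun m _ => ?_
    rw [hz, ← zpow_natCast (ω ^ r) (m:ℕ), ← _root_.zpow_mul]
  rw [hsum]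
  by_cases hdvd : (2*n : ℤ) ∣ r
  · have hz1 : z = 1 := (hprim.zpow_eq_one_iff_dvd r).mpr hdvd
    simp [hz1, hdvd]
  · have hz1 : z ≠ 1 := fun h => hdvd ((hprim.zpow_eq_one_iff_dvd r).mp h)
    have hzN : z ^ (2*n) = 1 := by
      rw [hz, ← zpow_natCast (ω ^ r) (2*n), ← _root_.zpow_mul, mul_comm, _root_.zpow_mul,
        zpow_natCast, hprim.pow_eq_one, _root_.one_zpow]
    rw [geom_sum_eq hz1, hzN]
    simp [hdvd]

/-- Any Toeplitz matrix `B ∈ ℂ^{n×n}` factorizes as `B = G D G*` with `D` a `2n×2n` diagonal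
matrix and `G` the `n×2n` Vandermonde matrix `G j k = (1/(2n)) exp(iπ(j+1)k/n)`. -/
theorem toeplitz_factorization (n : ℕ) (B : Matrix (Fin n) (Fin n) ℂ)
    (hB : ∃ b : ℤ → ℂ, ∀ j k : Fin n, B j k = b ((k : ℕ) - (j : ℕ) : ℤ)) :
    ∃ D : Matrix (Fin (2 * n)) (Fin (2 * n)) ℂ, D.IsDiag ∧
      B = (Matrix.of fun (j : Fin n) (k : Fin (2 * n)) =>
            (1 / (2 * n) : ℂ) *
              Complex.exp (Real.pi * Complex.I * ((j : ℕ) + 1) * (k : ℕ) / n)) * D *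
          (Matrix.of fun (j : Fin n) (k : Fin (2 * n)) =>
            (1 / (2 * n) : ℂ) *
              Complex.exp (Real.pi * Complex.I * ((j : ℕ) + 1) * (k : ℕ) / n))ᴴ := by
  obtain ⟨b, hb⟩ := hB
  rcases Nat.eq_zero_or_pos n with hn0 | hn
  · subst hn0
    exact ⟨0, Matrix.isDiag_zero, by ext j k; exact absurd j.2 (by omega)⟩
  have hn' : n ≠ 0 := hn.ne'
  have hnC : (n : ℂ) ≠ 0 := Nat.cast_ne_zero.mpr hn'
  have hNC : (2 * n : ℂ) ≠ 0 := mul_ne_zero two_ne_zero hnC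
  set ω := Complex.exp (Real.pi * I / n) with hω
  have hωne : ω ≠ 0 := Complex.exp_ne_zero _
  -- entries of G as powers of ω
  have hG : ∀ (j : Fin n) (q : Fin (2*n)),
      Complex.exp (Real.pi * I * ((j : ℕ) + 1) * (q : ℕ) / n) = ω ^ ((((j:ℕ)+1) * (q:ℕ) : ℕ) : ℤ) := by
    intro j q
    rw [zpow_natCast, hω, ← Complex.exp_nat_mul]
    congr 1
    push_cast
    field_simp
  -- conjugation
  have hconjω : (starRingEnd ℂ) ω = ω⁻¹ := by
    rw [hω, ← Complex.exp_conj, ← Complex.exp_neg]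
    congr 1
    simp only [map_div₀, _root_.map_mul, Complex.conj_I, Complex.conj_ofReal, Complex.conj_natCast]
    ring
  have hconj : ∀ m : ℤ, (starRingEnd ℂ) (ω ^ m) = ω ^ (-m) := by
    intro m
    rw [map_zpow₀, hconjω, _root_.inv_zpow, ← _root_.zpow_neg]
  -- the diagonal entries
  set c : Fin (2*n) → ℂ := fun s => if (s:ℕ) < n then b (-(s:ℕ) : ℤ) else b ((2*n : ℤ) - (s:ℕ))
    with hc
  set d : Fin (2*n) → ℂ := fun m => (2*n : ℂ) * ∑ s : Fin (2*n), c s * ω ^ (-(s:ℤ) * (m:ℕ))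
    with hd
  refine ⟨Matrix.diagonal d, Matrix.isDiag_diagonal d, ?_⟩
  ext j k
  rw [Matrix.mul_assoc, Matrix.mul_apply]
  set t : ℤ := ((j:ℕ):ℤ) - ((k:ℕ):ℤ) with ht
  have hentry : ∀ q : Fin (2*n),
      (Matrix.of fun (j : Fin n) (k : Fin (2 * n)) =>
            (1 / (2 * n) : ℂ) *
              Complex.exp (Real.pi * Complex.I * ((j : ℕ) + 1) * (k : ℕ) / n)) j q *
        ((Matrix.diagonal d) *
          (Matrix.of fun (j : Fin n) (k : Fin (2 * n)) =>
            (1 / (2 * n) : ℂ) *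
              Complex.exp (Real.pi * Complex.I * ((j : ℕ) + 1) * (k : ℕ) / n))ᴴ) q k =
      (1 / (2*n) : ℂ)^2 * d q * ω ^ (t * (q:ℕ)) := by
    intro q
    rw [Matrix.diagonal_mul, Matrix.conjTranspose_apply, Matrix.of_apply, Matrix.of_apply,
      hG j q, hG k q]
    have hstar : star ((1 / (2 * (n:ℂ))) * ω ^ ((((k:ℕ)+1) * (q:ℕ) : ℕ) : ℤ))
        = (1 / (2 * (n:ℂ))) * ω ^ (-((((k:ℕ)+1) * (q:ℕ) : ℕ) : ℤ)) := by
      rw [star_mul']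
      congr 1
      · simp
      · exact hconj _
    rw [hstar]
    have he : ω ^ ((((j:ℕ)+1) * (q:ℕ) : ℕ) : ℤ) * ω ^ (-((((k:ℕ)+1) * (q:ℕ) : ℕ) : ℤ))
        = ω ^ (t * (q:ℕ)) := by
      rw [← zpow_add₀ hωne]
      congr 1
      push_cast [ht]
      ring
    calc (1 / (2*(n:ℂ))) * ω ^ ((((j:ℕ)+1) * (q:ℕ) : ℕ) : ℤ) *
          (d q * ((1 / (2 * (n:ℂ))) * ω ^ (-((((k:ℕ)+1) * (q:ℕ) : ℕ) : ℤ))))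
        = (1 / (2*(n:ℂ)))^2 * d q *
            (ω ^ ((((j:ℕ)+1) * (q:ℕ) : ℕ) : ℤ) * ω ^ (-((((k:ℕ)+1) * (q:ℕ) : ℕ) : ℤ))) := by ring
      _ = (1 / (2*n) : ℂ)^2 * d q * ω ^ (t * (q:ℕ)) := by rw [he]
  rw [Finset.sum_congr rfl fun q _ => hentry q]
  -- expand d, swap sums, apply root-of-unity sum
  have hswap : ∑ q : Fin (2*n), (1 / (2*n) : ℂ)^2 * d q * ω ^ (t * (q:ℕ)) =
      (1 / (2*n) : ℂ) * ∑ s : Fin (2*n), c s *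
        ∑ q : Fin (2*n), ω ^ ((t - (s:ℕ)) * (q:ℕ)) := by
    have step : ∀ q : Fin (2*n), (1 / (2*n) : ℂ)^2 * d q * ω ^ (t * (q:ℕ)) =
        ∑ s : Fin (2*n), (1 / (2*n) : ℂ) * (c s * ω ^ ((t - (s:ℕ)) * (q:ℕ))) := by
      intro q
      rw [hd]
      simp only [Finset.mul_sum, Finset.sum_mul]
      refine Finset.sum_congr rfl fun s _ => ?_
      have he : ω ^ (-(s:ℤ) * (q:ℕ)) * ω ^ (t * (q:ℕ)) = ω ^ ((t - (s:ℕ)) * (q:ℕ)) := by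
        rw [← zpow_add₀ hωne]
        congr 1
        ring
      calc (1 / (2*(n:ℂ)))^2 * ((2*(n:ℂ)) * (c s * ω ^ (-(s:ℤ) * (q:ℕ)))) * ω ^ (t * (q:ℕ))
          = (1 / (2*(n:ℂ)))^2 * (2*(n:ℂ)) * c s *
              (ω ^ (-(s:ℤ) * (q:ℕ)) * ω ^ (t * (q:ℕ))) := by ring
        _ = (1 / (2*(n:ℂ)))^2 * (2*(n:ℂ)) * c s * ω ^ ((t - (s:ℕ)) * (q:ℕ)) := by rw [he]
        _ = (1 / (2*n) : ℂ) * (c s * ω ^ ((t - (s:ℕ)) * (q:ℕ))) := by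
            field_simp
    rw [Finset.sum_congr rfl fun q _ => step q, Finset.sum_comm, Finset.mul_sum]
    refine Finset.sum_congr rfl fun s _ => ?_
    rw [Finset.mul_sum, Finset.mul_sum]
  rw [hswap]
  have hroot : ∀ s : Fin (2*n), ∑ q : Fin (2*n), ω ^ ((t - (s:ℕ)) * (q:ℕ)) =
      if (2*n : ℤ) ∣ (t - (s:ℕ)) then (2*n : ℂ) else 0 := fun s => sum_pow_root n hn' _
  rw [Finset.sum_congr rfl fun s _ => by rw [hroot s]]
  -- identify the unique surviving index
  have hjn : (j:ℕ) < n := j.2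
  have hkn : (k:ℕ) < n := k.2
  by_cases hjk : (k:ℕ) ≤ (j:ℕ)
  · set s₀ : Fin (2*n) := ⟨(j:ℕ) - (k:ℕ), by omega⟩ with hs₀
    have hdvd0 : (2*n : ℤ) ∣ (t - (s₀:ℕ)) := by
      have : t - ((s₀:ℕ):ℤ) = 0 := by simp only [hs₀, ht]; omega
      rw [this]; exact dvd_zero _
    have huniq : ∀ s : Fin (2*n), s ≠ s₀ → ¬ (2*n : ℤ) ∣ (t - (s:ℕ)) := by
      intro s hs hdvd
      obtain ⟨m, hm⟩ := hdvd
      have hsb : (s:ℕ) < 2*n := s.2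
      have hm0 : m = 0 := by nlinarith [hm, ht]
      rw [hm0, mul_zero] at hm
      apply hs
      apply Fin.ext
      have hval : (s₀:ℕ) = (j:ℕ) - (k:ℕ) := rfl
      omega
    rw [Finset.sum_eq_single s₀ (fun s _ hs => by rw [if_neg (huniq s hs)]; ring)
      (fun h => absurd (Finset.mem_univ s₀) h), if_pos hdvd0]
    rw [hb j k, hc]
    simp only [hs₀]
    rw [if_pos (by omega : (j:ℕ) - (k:ℕ) < n)]
    have harg : (-(((j:ℕ) - (k:ℕ) : ℕ)) : ℤ) = ((k:ℕ):ℤ) - ((j:ℕ):ℤ) := by omega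
    rw [harg]
    field_simp
  · set s₀ : Fin (2*n) := ⟨2*n + (j:ℕ) - (k:ℕ), by omega⟩ with hs₀
    have hdvd0 : (2*n : ℤ) ∣ (t - (s₀:ℕ)) := by
      refine ⟨-1, ?_⟩
      have hval : (s₀:ℕ) = 2*n + (j:ℕ) - (k:ℕ) := rfl
      have : ((s₀:ℕ):ℤ) = 2*n + ((j:ℕ):ℤ) - ((k:ℕ):ℤ) := by omega
      rw [this, ht]; ring
    have huniq : ∀ s : Fin (2*n), s ≠ s₀ → ¬ (2*n : ℤ) ∣ (t - (s:ℕ)) := by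
      intro s hs hdvd
      obtain ⟨m, hm⟩ := hdvd
      have hsb : (s:ℕ) < 2*n := s.2
      have hm0 : m = -1 := by nlinarith [hm, ht]
      rw [hm0] at hm
      apply hs
      apply Fin.ext
      have hval : (s₀:ℕ) = 2*n + (j:ℕ) - (k:ℕ) := rfl
      omega
    rw [Finset.sum_eq_single s₀ (fun s _ hs => by rw [if_neg (huniq s hs)]; ring)
      (fun h => absurd (Finset.mem_univ s₀) h), if_pos hdvd0]
    rw [hb j k, hc]
    simp only [hs₀]
    rw [if_neg (by omega : ¬ (2*n + (j:ℕ) - (k:ℕ) < n))]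
    have harg : ((2*n : ℤ) - ((2*n + (j:ℕ) - (k:ℕ) : ℕ))) = ((k:ℕ):ℤ) - ((j:ℕ):ℤ) := by
      omega
    rw [harg]
    field_simp
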